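/- For the parity-constrained Hanoi graph P^n, the maximum degree satisfies: Δ(P^1)=2, Δ(P^2)=4, and Δ(P^n)=5 for all n≥3. -/

import Mathlib

/-- Parity constraint on a state: disc `d+1` (labelled `1,…,n`) may not sit on
peg `2` if it is even, nor on peg `1` if it is odd. -/
def pegOK (n : ℕ) (s : Fin n → Fin 4) : Prop :=
  ∀ d : Fin n, (Even ((d : ℕ) + 1) → s d ≠ 2) ∧ (Odd ((d : ℕ) + 1) → s d ≠ 1)

instance (n : ℕ) : DecidablePred (pegOK n) := fun s => by
  unfold pegOK; infer_instance

/-- Vertices of the parity-constrained Hanoi graph `P^n`. -/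
abbrev PVertex (n : ℕ) := {s : Fin n → Fin 4 // pegOK n s}

/-- The parity-constrained four-peg Hanoi graph `P^n`: two states are adjacent iff
they differ in exactly one coordinate `d` (a legal move of disc `d+1`) and no
smaller disc sits on either of the two pegs involved. -/
def PGraph (n : ℕ) : SimpleGraph (PVertex n) where
  Adj s t := ∃ d : Fin n,
    s.1 d ≠ t.1 d ∧ (∀ k, k ≠ d → s.1 k = t.1 k) ∧
    (∀ k, k < d → s.1 k ≠ s.1 d ∧ s.1 k ≠ t.1 d)
  symm := by
    constructor
    rintro s t ⟨d, hne, heq, hlt⟩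
    refine ⟨d, hne.symm, fun k hk => (heq k hk).symm, fun k hk => ?_⟩
    have h := hlt k hk
    rw [← heq k (ne_of_lt hk)]
    exact ⟨h.2, h.1⟩
  loopless := by constructor; rintro s ⟨d, hne, -⟩; exact hne rfl

instance (n : ℕ) : DecidableRel (PGraph n).Adj := fun s t =>
  decidable_of_iff (∃ d : Fin n,
    s.1 d ≠ t.1 d ∧ (∀ k, k ≠ d → s.1 k = t.1 k) ∧
    (∀ k, k < d → s.1 k ≠ s.1 d ∧ s.1 k ≠ t.1 d)) Iff.rfl

open Finset

/-- A legal move from state `s`: move disc `p.1` to peg `p.2`. -/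
def legalPair {n : ℕ} (s : PVertex n) (p : Fin n × Fin 4) : Prop :=
  p.2 ≠ s.1 p.1 ∧
  (Even ((p.1 : ℕ) + 1) → p.2 ≠ 2) ∧ (Odd ((p.1 : ℕ) + 1) → p.2 ≠ 1) ∧
  ∀ k, k < p.1 → s.1 k ≠ s.1 p.1 ∧ s.1 k ≠ p.2

instance {n : ℕ} (s : PVertex n) : DecidablePred (legalPair s) := fun p => by
  unfold legalPair; infer_instance

def movePairs {n : ℕ} (s : PVertex n) : Finset (Fin n × Fin 4) :=
  Finset.univ.filter (legalPair s)

lemma mem_movePairs {n : ℕ} (s : PVertex n) (p : Fin n × Fin 4) :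
    p ∈ movePairs s ↔ legalPair s p := by simp [movePairs]

lemma pegOK_update {n : ℕ} (s : PVertex n) (d : Fin n) (q : Fin 4)
    (h2 : Even ((d : ℕ) + 1) → q ≠ 2) (h1 : Odd ((d : ℕ) + 1) → q ≠ 1) :
    pegOK n (Function.update s.1 d q) := by
  intro k
  rcases eq_or_ne k d with rfl | hk
  · simpa using ⟨h2, h1⟩
  · simpa [Function.update_of_ne hk] using s.2 k

lemma degree_eq_movePairs {n : ℕ} (s : PVertex n) :
    (PGraph n).degree s = (movePairs s).card := by
  rw [SimpleGraph.degree]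
  refine (Finset.card_bij (fun p hp => (⟨Function.update s.1 p.1 p.2,
      pegOK_update s p.1 p.2 ((mem_movePairs s p).1 hp).2.1
        ((mem_movePairs s p).1 hp).2.2.1⟩ : PVertex n)) ?_ ?_ ?_).symm
  · intro p hp
    obtain ⟨h1, h2, h3, h4⟩ := (mem_movePairs s p).1 hp
    rw [SimpleGraph.mem_neighborFinset]
    refine ⟨p.1, ?_, ?_, ?_⟩
    · simpa using h1.symm
    · intro k hk; simp [Function.update_of_ne hk]
    · intro k hk; simpa using h4 k hk
  · intro p hp p' hp' h
    obtain ⟨h1, -, -, -⟩ := (mem_movePairs s p).1 hp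
    have hfun := congrArg Subtype.val h
    simp only at hfun
    rcases eq_or_ne p.1 p'.1 with he | he
    · have := congrFun hfun p.1
      rw [Function.update_self, ← he, Function.update_self] at this
      exact Prod.ext he this
    · have := congrFun hfun p.1
      rw [Function.update_self, Function.update_of_ne he] at this
      exact absurd this h1
  · intro t ht
    rw [SimpleGraph.mem_neighborFinset] at ht
    obtain ⟨d, hne, heq, hlt⟩ := ht
    refine ⟨(d, t.1 d), (mem_movePairs s _).2 ⟨hne.symm, (t.2 d).1, (t.2 d).2,
      fun k hk => hlt k hk⟩, ?_⟩
    apply Subtype.ext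
    funext k
    simp only
    rcases eq_or_ne k d with rfl | hk
    · simp
    · rw [Function.update_of_ne hk]; exact heq k hk

set_option synthInstance.maxSize 5000 in
/- Four values pairwise distinct and avoiding two further values: impossible in `Fin 4`. -/
lemma fin4_key3 : ∀ x0 x1 sd se sf qf : Fin 4,
    x0 ≠ sd → x1 ≠ sd → x0 ≠ se → x1 ≠ se → sd ≠ se →
    x0 ≠ sf → x1 ≠ sf → sd ≠ sf → se ≠ sf →
    x0 ≠ qf → x1 ≠ qf → sd ≠ qf → se ≠ qf → qf ≠ sf → False := by decide

set_option synthInstance.maxSize 5000 in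
lemma fin4_key2 : ∀ x1 sd se qe : Fin 4,
    x1 ≠ 2 → sd ≠ 2 → sd ≠ x1 → se ≠ 2 → se ≠ x1 → se ≠ sd →
    qe ≠ 2 → qe ≠ x1 → qe ≠ sd → qe ≠ se → False := by decide

set_option synthInstance.maxSize 5000 in
lemma fin4_uniq2 : ∀ x0 x1 a q q' : Fin 4, x0 ≠ 1 → x1 ≠ 2 →
    ((a ≠ 2 ∧ q ≠ 2 ∧ q' ≠ 2) ∨ (a ≠ 1 ∧ q ≠ 1 ∧ q' ≠ 1)) →
    x0 ≠ a → x0 ≠ q → x0 ≠ q' → x1 ≠ a → x1 ≠ q → x1 ≠ q' →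
    q ≠ a → q' ≠ a → q = q' := by decide

set_option synthInstance.maxSize 5000 in
lemma fin4_uniq0 : ∀ x a b c : Fin 4, x ≠ 1 → a ≠ 1 → b ≠ 1 → c ≠ 1 →
    a ≠ x → b ≠ x → c ≠ x → a ≠ b → a ≠ c → b ≠ c → False := by decide

set_option synthInstance.maxSize 5000 in
lemma fin4_uniq1 : ∀ x a b c : Fin 4, x ≠ 2 → a ≠ 2 → b ≠ 2 → c ≠ 2 →
    a ≠ x → b ≠ x → c ≠ x → a ≠ b → a ≠ c → b ≠ c → False := by decide

set_option synthInstance.maxSize 5000 in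
lemma fin4_T1 : ∀ x a q q' : Fin 4, x ≠ 1 → x ≠ 2 → a ≠ 2 →
    x ≠ a → x ≠ q → x ≠ q' → q ≠ 2 → q' ≠ 2 → q ≠ a → q' ≠ a → q = q' := by decide

section UB
variable {n : ℕ} (hn : 3 ≤ n) (s : PVertex n)

/-- Coordinate `i` of `Fin n` for `i < 3`. -/
private def co (i : ℕ) (h : i < 3) : Fin n := ⟨i, lt_of_lt_of_le h hn⟩

/-- Three movable discs of index `≥ 2` are impossible. -/
lemma key3 {p p' p'' : Fin n × Fin 4}
    (hp : legalPair s p) (hp' : legalPair s p') (hp'' : legalPair s p'')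
    (h2 : 2 ≤ (p.1 : ℕ)) (hlt1 : p.1 < p'.1) (hlt2 : p'.1 < p''.1) : False := by
  have hk0 : (⟨0, by omega⟩ : Fin n) < p.1 := by simp [Fin.lt_def]; omega
  have hk1 : (⟨1, by omega⟩ : Fin n) < p.1 := by simp [Fin.lt_def]; omega
  set x0 := s.1 ⟨0, by omega⟩ with hx0
  set x1 := s.1 ⟨1, by omega⟩ with hx1
  exact fin4_key3 x0 x1 (s.1 p.1) (s.1 p'.1) (s.1 p''.1) p''.2
    (hp.2.2.2 _ hk0).1 (hp.2.2.2 _ hk1).1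
    (hp'.2.2.2 _ (hk0.trans hlt1)).1 (hp'.2.2.2 _ (hk1.trans hlt1)).1
    (hp'.2.2.2 _ hlt1).1
    (hp''.2.2.2 _ ((hk0.trans hlt1).trans hlt2)).1
    (hp''.2.2.2 _ ((hk1.trans hlt1).trans hlt2)).1
    (hp''.2.2.2 _ (hlt1.trans hlt2)).1 (hp''.2.2.2 _ hlt2).1
    (hp''.2.2.2 _ ((hk0.trans hlt1).trans hlt2)).2
    (hp''.2.2.2 _ ((hk1.trans hlt1).trans hlt2)).2
    (hp''.2.2.2 _ (hlt1.trans hlt2)).2 (hp''.2.2.2 _ hlt2).2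
    hp''.1

/-- If disc 1 sits on peg 2, two movable discs of index `≥ 2` are impossible. -/
lemma key2 (h02 : s.1 ⟨0, by omega⟩ = 2) {p p' : Fin n × Fin 4}
    (hp : legalPair s p) (hp' : legalPair s p')
    (h2 : 2 ≤ (p.1 : ℕ)) (hlt1 : p.1 < p'.1) : False := by
  have hk0 : (⟨0, by omega⟩ : Fin n) < p.1 := by simp [Fin.lt_def]; omega
  have hk1 : (⟨1, by omega⟩ : Fin n) < p.1 := by simp [Fin.lt_def]; omega
  have hx1 : s.1 ⟨1, by omega⟩ ≠ 2 := (s.2 ⟨1, by omega⟩).1 (by simp)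
  refine fin4_key2 (s.1 ⟨1, by omega⟩) (s.1 p.1) (s.1 p'.1) p'.2 hx1
    ?_ (hp.2.2.2 _ hk1).1.symm ?_ (hp'.2.2.2 _ (hk1.trans hlt1)).1.symm
    (hp'.2.2.2 _ hlt1).1.symm ?_ (hp'.2.2.2 _ (hk1.trans hlt1)).2.symm
    (hp'.2.2.2 _ hlt1).2.symm hp'.1
  · rw [← h02]; exact (hp.2.2.2 _ hk0).1.symm
  · rw [← h02]; exact (hp'.2.2.2 _ (hk0.trans hlt1)).1.symm
  · rw [← h02]; exact (hp'.2.2.2 _ (hk0.trans hlt1)).2.symm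

/-- For a movable disc of index `≥ 2`, the target peg is unique. -/
lemma uniq2 {p p' : Fin n × Fin 4}
    (hp : legalPair s p) (hp' : legalPair s p')
    (h2 : 2 ≤ (p.1 : ℕ)) (he : p.1 = p'.1) : p.2 = p'.2 := by
  have hk0 : (⟨0, by omega⟩ : Fin n) < p.1 := by simp [Fin.lt_def]; omega
  have hk1 : (⟨1, by omega⟩ : Fin n) < p.1 := by simp [Fin.lt_def]; omega
  have hx0 : s.1 ⟨0, by omega⟩ ≠ 1 := (s.2 ⟨0, by omega⟩).2 (by simp)
  have hx1 : s.1 ⟨1, by omega⟩ ≠ 2 := (s.2 ⟨1, by omega⟩).1 (by simp)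
  obtain ⟨hq1', hq2', hq3', hq4'⟩ := hp'
  rw [← he] at hq1' hq2' hq3' hq4'
  refine fin4_uniq2 _ _ (s.1 p.1) p.2 p'.2 hx0 hx1 ?_
    (hp.2.2.2 _ hk0).1 (hp.2.2.2 _ hk0).2 (hq4' _ hk0).2
    (hp.2.2.2 _ hk1).1 (hp.2.2.2 _ hk1).2 (hq4' _ hk1).2
    hp.1 hq1'
  rcases Nat.even_or_odd ((p.1 : ℕ) + 1) with hpar | hpar
  · exact Or.inl ⟨(s.2 p.1).1 hpar, hp.2.1 hpar, hq2' hpar⟩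
  · exact Or.inr ⟨(s.2 p.1).2 hpar, hp.2.2.1 hpar, hq3' hpar⟩

end UB

lemma movePairs_card_le {n : ℕ} (hn : 3 ≤ n) (s : PVertex n) :
    (movePairs s).card ≤ 5 := by
  classical
  set T := movePairs s with hT
  set T0 := T.filter (fun p => (p.1 : ℕ) = 0) with hT0
  set T1 := T.filter (fun p => (p.1 : ℕ) = 1) with hT1
  set T2 := T.filter (fun p => 2 ≤ (p.1 : ℕ)) with hT2
  have leg0 : ∀ p ∈ T0, legalPair s p ∧ (p.1 : ℕ) = 0 := by
    intro p hp
    rw [hT0, mem_filter, hT, mem_movePairs] at hp; exact hp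
  have leg1 : ∀ p ∈ T1, legalPair s p ∧ (p.1 : ℕ) = 1 := by
    intro p hp
    rw [hT1, mem_filter, hT, mem_movePairs] at hp; exact hp
  have leg2 : ∀ p ∈ T2, legalPair s p ∧ 2 ≤ (p.1 : ℕ) := by
    intro p hp
    rw [hT2, mem_filter, hT, mem_movePairs] at hp; exact hp
  have hsub : T ⊆ (T0 ∪ T1) ∪ T2 := by
    intro p hp
    simp only [mem_union, hT0, hT1, hT2, mem_filter]
    have : (p.1 : ℕ) = 0 ∨ (p.1 : ℕ) = 1 ∨ 2 ≤ (p.1 : ℕ) := by omega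
    tauto
  have hchain : T.card ≤ T0.card + T1.card + T2.card :=
    calc T.card ≤ ((T0 ∪ T1) ∪ T2).card := card_le_card hsub
      _ ≤ (T0 ∪ T1).card + T2.card := card_union_le _ _
      _ ≤ T0.card + T1.card + T2.card := Nat.add_le_add_right (card_union_le _ _) _
  have hc0 : T0.card ≤ 2 := by
    by_contra h
    push_neg at h
    obtain ⟨a, b, c, ha, hb, hc, hab, hac, hbc⟩ := two_lt_card_iff.1 h
    obtain ⟨hla, ha0⟩ := leg0 a ha
    obtain ⟨hlb, hb0⟩ := leg0 b hb
    obtain ⟨hlc, hc0⟩ := leg0 c hc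
    have hba : b.1 = a.1 := Fin.ext (by omega)
    have hca : c.1 = a.1 := Fin.ext (by omega)
    have hodd : Odd ((a.1 : ℕ) + 1) := by rw [ha0]; decide
    obtain ⟨hlb1, -, hlb3, -⟩ := hlb
    obtain ⟨hlc1, -, hlc3, -⟩ := hlc
    rw [hba] at hlb1
    rw [hca] at hlc1
    exact fin4_uniq0 (s.1 a.1) a.2 b.2 c.2 ((s.2 a.1).2 hodd)
      (hla.2.2.1 hodd) (hlb3 (hba ▸ hodd)) (hlc3 (hca ▸ hodd))
      hla.1 hlb1 hlc1
      (fun h' => hab (Prod.ext hba.symm h'))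
      (fun h' => hac (Prod.ext hca.symm h'))
      (fun h' => hbc ((Prod.ext (hba.trans hca.symm) h')))
  have hc1gen : T1.card ≤ 2 := by
    by_contra h
    push_neg at h
    obtain ⟨a, b, c, ha, hb, hc, hab, hac, hbc⟩ := two_lt_card_iff.1 h
    obtain ⟨hla, ha0⟩ := leg1 a ha
    obtain ⟨hlb, hb0⟩ := leg1 b hb
    obtain ⟨hlc, hc0⟩ := leg1 c hc
    have hba : b.1 = a.1 := Fin.ext (by omega)
    have hca : c.1 = a.1 := Fin.ext (by omega)
    have hev : Even ((a.1 : ℕ) + 1) := by rw [ha0]; decide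
    obtain ⟨hlb1, hlb2, -, -⟩ := hlb
    obtain ⟨hlc1, hlc2, -, -⟩ := hlc
    rw [hba] at hlb1
    rw [hca] at hlc1
    exact fin4_uniq1 (s.1 a.1) a.2 b.2 c.2 ((s.2 a.1).1 hev)
      (hla.2.1 hev) (hlb2 (hba ▸ hev)) (hlc2 (hca ▸ hev))
      hla.1 hlb1 hlc1
      (fun h' => hab (Prod.ext hba.symm h'))
      (fun h' => hac (Prod.ext hca.symm h'))
      (fun h' => hbc ((Prod.ext (hba.trans hca.symm) h')))
  by_cases h02 : s.1 ⟨0, by omega⟩ = 2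
  · -- disc 1 on peg 2 : at most one movable disc of index ≥ 2
    have hc2 : T2.card ≤ 1 := by
      by_contra h
      push_neg at h
      obtain ⟨a, ha, b, hb, hab⟩ := one_lt_card.1 h
      obtain ⟨hla, ha2⟩ := leg2 a ha
      obtain ⟨hlb, hb2⟩ := leg2 b hb
      rcases eq_or_ne a.1 b.1 with he | he
      · exact hab (Prod.ext he (uniq2 s hla hlb ha2 he))
      · rcases lt_or_gt_of_ne he with hlt | hlt
        · exact key2 hn s h02 hla hlb ha2 hlt
        · exact key2 hn s h02 hlb hla hb2 hlt
    omega
  · -- disc 1 not on peg 2 : disc 2 has at most one move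
    have hc1 : T1.card ≤ 1 := by
      by_contra h
      push_neg at h
      obtain ⟨a, ha, b, hb, hab⟩ := one_lt_card.1 h
      obtain ⟨hla, ha1⟩ := leg1 a ha
      obtain ⟨hlb, hb1⟩ := leg1 b hb
      have hba : b.1 = a.1 := Fin.ext (by omega)
      have hev : Even ((a.1 : ℕ) + 1) := by rw [ha1]; decide
      have hk0 : (⟨0, by omega⟩ : Fin n) < a.1 := by simp [Fin.lt_def]; omega
      obtain ⟨hlb1, hlb2, -, hlb4⟩ := hlb
      rw [hba] at hlb1 hlb4
      have := fin4_T1 (s.1 ⟨0, by omega⟩) (s.1 a.1) a.2 b.2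
        ((s.2 ⟨0, by omega⟩).2 (by simp)) h02 ((s.2 a.1).1 hev)
        (hla.2.2.2 _ hk0).1 (hla.2.2.2 _ hk0).2 (hlb4 _ hk0).2
        (hla.2.1 hev) (hlb2 (hba ▸ hev)) hla.1 hlb1
      exact hab (Prod.ext hba.symm this)
    have hc2 : T2.card ≤ 2 := by
      by_contra h
      push_neg at h
      obtain ⟨a, b, c, ha, hb, hc, hab, hac, hbc⟩ := two_lt_card_iff.1 h
      obtain ⟨hla, ha2⟩ := leg2 a ha
      obtain ⟨hlb, hb2⟩ := leg2 b hb
      obtain ⟨hlc, hc2'⟩ := leg2 c hc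
      have hab1 : a.1 ≠ b.1 := fun he => hab (Prod.ext he (uniq2 s hla hlb ha2 he))
      have hac1 : a.1 ≠ c.1 := fun he => hac (Prod.ext he (uniq2 s hla hlc ha2 he))
      have hbc1 : b.1 ≠ c.1 := fun he => hbc (Prod.ext he (uniq2 s hlb hlc hb2 he))
      rcases lt_or_gt_of_ne hab1 with h1 | h1
      · rcases lt_or_gt_of_ne hac1 with h2 | h2
        · rcases lt_or_gt_of_ne hbc1 with h3 | h3
          · exact key3 s hla hlb hlc ha2 h1 h3
          · exact key3 s hla hlc hlb ha2 h2 h3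
        · exact key3 s hlc hla hlb hc2' h2 h1
      · rcases lt_or_gt_of_ne hac1 with h2 | h2
        · exact key3 s hlb hla hlc hb2 h1 h2
        · rcases lt_or_gt_of_ne hbc1 with h3 | h3
          · exact key3 s hlb hlc hla hb2 h3 h2
          · exact key3 s hlc hlb hla hc2' h3 h1
    omega

def wit (n : ℕ) : Fin n → Fin 4 := fun k =>
  if (k : ℕ) = 0 then 2 else if (k : ℕ) = 1 then 1 else 0

lemma wit_ok (n : ℕ) : pegOK n (wit n) := by
  intro d
  by_cases h0 : (d : ℕ) = 0
  · refine ⟨fun he => ?_, fun _ => ?_⟩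
    · rw [h0] at he; exact absurd he (by decide)
    · simp [wit, h0]
  · by_cases h1 : (d : ℕ) = 1
    · refine ⟨fun _ => ?_, fun ho => ?_⟩
      · simp [wit, h0, h1]
      · rw [h1] at ho; exact absurd ho (by decide)
    · refine ⟨fun _ => ?_, fun _ => ?_⟩ <;> simp [wit, h0, h1]

lemma wit_degree {n : ℕ} (hn : 3 ≤ n) :
    5 ≤ (movePairs (⟨wit n, wit_ok n⟩ : PVertex n)).card := by
  classical
  have h0 : 0 < n := by omega
  have h1 : 1 < n := by omega
  have h2 : 2 < n := by omega
  set E : Finset (Fin n × Fin 4) :=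
    {(⟨0, h0⟩, 0), (⟨0, h0⟩, 3), (⟨1, h1⟩, 0), (⟨1, h1⟩, 3), (⟨2, h2⟩, 3)} with hE
  have hcard : E.card = 5 := by
    rw [hE]
    rw [card_insert_of_notMem (by simp [Prod.ext_iff, Fin.ext_iff] <;> decide),
      card_insert_of_notMem (by simp [Prod.ext_iff, Fin.ext_iff] <;> decide),
      card_insert_of_notMem (by simp [Prod.ext_iff, Fin.ext_iff] <;> decide),
      card_insert_of_notMem (by simp [Prod.ext_iff, Fin.ext_iff] <;> decide),
      card_singleton]
  have hsub : E ⊆ movePairs (⟨wit n, wit_ok n⟩ : PVertex n) := by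
    intro p hp
    rw [hE] at hp
    simp only [mem_insert, mem_singleton] at hp
    rw [mem_movePairs]
    rcases hp with rfl | rfl | rfl | rfl | rfl
    · exact ⟨by simp [wit], fun he => absurd (by simpa using he) (by decide : ¬ Even 1),
        fun _ => (by decide : (0 : Fin 4) ≠ 1), fun k hk => absurd hk (by simp [Fin.lt_def])⟩
    · exact ⟨by simp [wit], fun he => absurd (by simpa using he) (by decide : ¬ Even 1),
        fun _ => (by decide : (3 : Fin 4) ≠ 1), fun k hk => absurd hk (by simp [Fin.lt_def])⟩
    · refine ⟨by simp [wit], fun _ => (by decide : (0 : Fin 4) ≠ 2),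
        fun ho => absurd (by simpa using ho) (by decide : ¬ Odd 2), fun k hk => ?_⟩
      have hk0 : (k : ℕ) = 0 := by
        have := hk; rw [Fin.lt_def] at this; simpa using Nat.lt_one_iff.1 this
      constructor <;> simp [wit, hk0]
    · refine ⟨by simp [wit], fun _ => (by decide : (3 : Fin 4) ≠ 2),
        fun ho => absurd (by simpa using ho) (by decide : ¬ Odd 2), fun k hk => ?_⟩
      have hk0 : (k : ℕ) = 0 := by
        have := hk; rw [Fin.lt_def] at this; simpa using Nat.lt_one_iff.1 this
      constructor <;> simp [wit, hk0]
    · refine ⟨by simp [wit], fun he => absurd (by simpa using he) (by decide : ¬ Even 3),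
        fun _ => (by decide : (3 : Fin 4) ≠ 1), fun k hk => ?_⟩
      have hk01 : (k : ℕ) = 0 ∨ (k : ℕ) = 1 := by
        have := hk; rw [Fin.lt_def] at this; simp at this; omega
      rcases hk01 with hk0 | hk0 <;> constructor <;> simp [wit, hk0]
  calc 5 = E.card := hcard.symm
    _ ≤ _ := card_le_card hsub

theorem stmt11 :
    (PGraph 1).maxDegree = 2 ∧ (PGraph 2).maxDegree = 4 ∧
    ∀ n : ℕ, 3 ≤ n → (PGraph n).maxDegree = 5 := by
  refine ⟨by decide, by decide, fun n hn => ?_⟩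
  have upper : (PGraph n).maxDegree ≤ 5 :=
    SimpleGraph.maxDegree_le_of_forall_degree_le (G := PGraph n) 5 fun v => by
      rw [degree_eq_movePairs]; exact movePairs_card_le hn v
  have lower : 5 ≤ (PGraph n).maxDegree :=
    le_trans (by rw [degree_eq_movePairs]; exact wit_degree hn)
      (SimpleGraph.degree_le_maxDegree (G := PGraph n) (⟨wit n, wit_ok n⟩ : PVertex n))
  omega
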